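/- Let k be a field, X a connected scheme proper over k, x ∈ X(k), and C_X a Tannakian category of vector bundles on X with fiber functor at x. If E ∈ C_X and F is a vector bundle on X belonging to the saturation C̄_X with F a subobject of E in C̄_X (i.e., a subbundle with quotient in C̄_X), then F ∈ C_X. -/
import Mathlib

/-!
# Statement 13 (Subobjects of objects of `C_X` lying in the saturation belong to `C_X`)

Here `A` stands for the ambient abelian monoidal category of sheaves on a connected scheme
`X` proper over `k` (all objects appearing being vector bundles), `D : A → A` for the duality
`E ↦ E^∨`, and a `TannakianSub` for a Tannakian subcategory `C_X` of vector bundles on `X`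
with fibre functor at a rational point `x ∈ X(k)`.  `InSaturation C F` says that `F` belongs
to the saturation `C̄_X` (it admits a filtration with successive quotients in `C_X`).
The theorem: if `E ∈ C_X` and `F ∈ C̄_X` is a subobject of `E` in `C̄_X` (a subbundle with
quotient in `C̄_X`), then `F ∈ C_X`. -/

open CategoryTheory CategoryTheory.Limits MonoidalCategory

universe v u

/-- A Tannakian subcategory of vector bundles inside the ambient category `A`, given by a
membership predicate `mem`; `D` is the duality `E ↦ E^∨`. -/
structure TannakianSub (A : Type u) [Category.{v} A] [Abelian A] [MonoidalCategory A]
    (D : A → A) where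
  /-- membership in the Tannakian subcategory `C_X` -/
  mem : A → Prop
  mem_unit : mem (𝟙_ A)
  mem_of_iso : ∀ {X Y : A}, (X ≅ Y) → mem X → mem Y
  mem_tensor : ∀ {X Y : A}, mem X → mem Y → mem (X ⊗ Y)
  mem_dual : ∀ {X : A}, mem X → mem (D X)
  mem_kernel : ∀ {X Y : A} (f : X ⟶ Y), mem X → mem Y → mem (kernel f)
  mem_cokernel : ∀ {X Y : A} (f : X ⟶ Y), mem X → mem Y → mem (cokernel f)

/-- `E` lies in the saturation `C̄_X` of `C_X`: it admits a filtration
`0 = F₀ ↪ F₁ ↪ ⋯ ↪ Fₙ = E` with all successive quotients in `C_X`. -/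
def TannakianSub.InSaturation {A : Type u} [Category.{v} A] [Abelian A] [MonoidalCategory A]
    {D : A → A} (C : TannakianSub A D) (E : A) : Prop :=
  ∃ (n : ℕ) (F : Fin (n + 1) → A) (f : ∀ i : Fin n, F i.castSucc ⟶ F i.succ),
    IsZero (F 0) ∧ Nonempty (F (Fin.last n) ≅ E) ∧
      (∀ i, Mono (f i)) ∧ (∀ i, C.mem (cokernel (f i)))

section Aux

variable {A : Type u} [Category.{v} A] [Abelian A]

lemma comp_cokernelπ_imageι {X Y : A} (g : X ⟶ Y) :
    g ≫ cokernel.π (Abelian.image.ι g) = 0 := by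
  calc g ≫ cokernel.π (Abelian.image.ι g)
      = (Abelian.factorThruImage g ≫ Abelian.image.ι g) ≫ cokernel.π (Abelian.image.ι g) := by
        rw [Abelian.image.fac]
    _ = 0 := by rw [Category.assoc, cokernel.condition, comp_zero]

/-- `f` is a kernel of `ι ≫ cokernel.π (f ≫ ι)` when `f`, `ι` are monos. -/
noncomputable def kernelForkStep {G F E : A} (f : G ⟶ F) (ι : F ⟶ E) [Mono f] [Mono ι]
    (hcond : f ≫ (ι ≫ cokernel.π (f ≫ ι)) = 0) :
    IsLimit (KernelFork.ofι f hcond) := by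
  have hαker : IsLimit (KernelFork.ofι (f ≫ ι) (cokernel.condition (f ≫ ι))) :=
    Abelian.monoIsKernelOfCokernel
      (CokernelCofork.ofπ (cokernel.π (f ≫ ι)) (cokernel.condition (f ≫ ι)))
      (cokernelIsCokernel (f ≫ ι))
  refine KernelFork.IsLimit.ofι' f hcond (fun {T} t ht => ?_)
  obtain ⟨l, hl⟩ := KernelFork.IsLimit.lift' hαker (t ≫ ι)
    (by rw [Category.assoc]; exact ht)
  simp only [Fork.ι_ofι] at hl
  refine ⟨l, (cancel_mono ι).1 ?_⟩
  rw [Category.assoc]; exact hl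

variable {D : A → A} [MonoidalCategory A]

/-- Key step: if `G ∈ C`, `G ↪ F ↪ E` with `E ∈ C` and `F/G ∈ C`, then `F ∈ C`. -/
lemma mem_step (C : TannakianSub A D) {G F E : A}
    (f : G ⟶ F) (ι : F ⟶ E) [Mono f] [Mono ι]
    (hG : C.mem G) (hE : C.mem E) (hQ : C.mem (cokernel f)) : C.mem F := by
  have hcond : f ≫ (ι ≫ cokernel.π (f ≫ ι)) = 0 := by
    rw [← Category.assoc, cokernel.condition]
  have hfker := kernelForkStep f ι hcond
  -- the Abelian image of `h := ι ≫ cokernel.π (f ≫ ι)` is isomorphic to `cokernel f`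
  have hκ : (IsLimit.conePointUniqueUpToIso
        (kernelIsKernel (ι ≫ cokernel.π (f ≫ ι))) hfker).hom ≫ f
      = kernel.ι (ι ≫ cokernel.π (f ≫ ι)) :=
    IsLimit.conePointUniqueUpToIso_hom_comp _ hfker WalkingParallelPair.zero
  have hImIso : Abelian.image (ι ≫ cokernel.π (f ≫ ι)) ≅ cokernel f :=
    (Abelian.coimageIsoImage (ι ≫ cokernel.π (f ≫ ι))).symm ≪≫
      cokernelIsoOfEq hκ.symm ≪≫ cokernelEpiComp _ f
  have hImMem : C.mem (Abelian.image (ι ≫ cokernel.π (f ≫ ι))) :=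
    C.mem_of_iso hImIso.symm hQ
  have hKmem : C.mem (cokernel (f ≫ ι)) := C.mem_cokernel (f ≫ ι) hG hE
  have hCJmem : C.mem (cokernel (Abelian.image.ι (ι ≫ cokernel.π (f ≫ ι)))) :=
    C.mem_cokernel _ hImMem hKmem
  have hιw : ι ≫ (cokernel.π (f ≫ ι) ≫
      cokernel.π (Abelian.image.ι (ι ≫ cokernel.π (f ≫ ι)))) = 0 := by
    rw [← Category.assoc]
    exact comp_cokernelπ_imageι (ι ≫ cokernel.π (f ≫ ι))
  -- comparison isomorphism between `cokernel ι` and the cokernel of the image inclusion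
  have hρ0 : (f ≫ ι) ≫ cokernel.π ι = 0 := by
    rw [Category.assoc, cokernel.condition, comp_zero]
  have hπρ : cokernel.π (f ≫ ι) ≫ cokernel.desc (f ≫ ι) (cokernel.π ι) hρ0 = cokernel.π ι :=
    cokernel.π_desc _ _ _
  have hjρ : Abelian.image.ι (ι ≫ cokernel.π (f ≫ ι)) ≫
      cokernel.desc (f ≫ ι) (cokernel.π ι) hρ0 = 0 := by
    refine (cancel_epi (Abelian.factorThruImage (ι ≫ cokernel.π (f ≫ ι)))).1 ?_
    rw [comp_zero, ← Category.assoc, Abelian.image.fac, Category.assoc, hπρ,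
      cokernel.condition]
  have hφψ : cokernel.desc ι _ hιw ≫ cokernel.desc _ _ hjρ = 𝟙 (cokernel ι) := by
    refine (cancel_epi (cokernel.π ι)).1 ?_
    rw [← Category.assoc, cokernel.π_desc, Category.assoc, cokernel.π_desc, hπρ,
      Category.comp_id]
  have hψφ : cokernel.desc _ _ hjρ ≫ cokernel.desc ι _ hιw =
      𝟙 (cokernel (Abelian.image.ι (ι ≫ cokernel.π (f ≫ ι)))) := by
    refine (cancel_epi (cokernel.π _)).1 ?_
    rw [← Category.assoc, cokernel.π_desc, Category.comp_id]
    refine (cancel_epi (cokernel.π (f ≫ ι))).1 ?_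
    rw [← Category.assoc, hπρ, cokernel.π_desc]
  have hφiso : IsIso (cokernel.desc ι _ hιw) := ⟨cokernel.desc _ _ hjρ, hφψ, hψφ⟩
  have hmonoφ : Mono (cokernel.desc ι _ hιw) := by
    have := hφiso; infer_instance
  have hwEq : cokernel.π (f ≫ ι) ≫
      cokernel.π (Abelian.image.ι (ι ≫ cokernel.π (f ≫ ι))) =
      cokernel.π ι ≫ cokernel.desc ι _ hιw := (cokernel.π_desc _ _ _).symm
  have hιker : IsLimit (KernelFork.ofι ι (cokernel.condition ι)) :=
    Abelian.monoIsKernelOfCokernel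
      (CokernelCofork.ofπ (cokernel.π ι) (cokernel.condition ι)) (cokernelIsCokernel ι)
  have hKiso : kernel (cokernel.π (f ≫ ι) ≫
      cokernel.π (Abelian.image.ι (ι ≫ cokernel.π (f ≫ ι)))) ≅ F :=
    kernelIsoOfEq hwEq ≪≫ kernelCompMono (cokernel.π ι) (cokernel.desc ι _ hιw) ≪≫
      IsLimit.conePointUniqueUpToIso (kernelIsKernel (cokernel.π ι)) hιker
  exact C.mem_of_iso hKiso (C.mem_kernel _ hE hCJmem)

lemma mem_zero_of_isZero (C : TannakianSub A D) {Z : A} (hZ : IsZero Z) : C.mem Z := by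
  have h0 : IsZero (kernel (𝟙 (𝟙_ A))) :=
    (isZero_zero A).of_iso (kernel.ofMono (𝟙 (𝟙_ A)))
  exact C.mem_of_iso (h0.iso hZ) (C.mem_kernel _ C.mem_unit C.mem_unit)

lemma mem_top_of_filtration (C : TannakianSub A D) :
    ∀ (n : ℕ) (F : Fin (n + 1) → A) (f : ∀ i : Fin n, F i.castSucc ⟶ F i.succ),
      IsZero (F 0) → (∀ i, Mono (f i)) → (∀ i, C.mem (cokernel (f i))) →
      ∀ (E : A), C.mem E → ∀ (ι : F (Fin.last n) ⟶ E), Mono ι → C.mem (F (Fin.last n)) := by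
  intro n
  induction n with
  | zero =>
    intro F f h0 _ _ E hE ι hι
    exact mem_zero_of_isZero C h0
  | succ n IH =>
    intro F f h0 hm hc E hE ι hι
    have hftop : Mono (f (Fin.last n)) := hm _
    have hιtop : Mono ι := hι
    have hmonoα : Mono ((f (Fin.last n) : F (Fin.last n).castSucc ⟶ F (Fin.last (n+1))) ≫ ι) :=
      mono_comp _ _
    have hG : C.mem (F (Fin.last n).castSucc) := by
      refine IH (fun i : Fin (n+1) => F i.castSucc) (fun i : Fin n => f i.castSucc) ?_
        (fun i => hm _) (fun i => hc _) E hE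
        ((f (Fin.last n) : F (Fin.last n).castSucc ⟶ F (Fin.last (n+1))) ≫ ι) hmonoα
      exact h0
    exact mem_step C (f (Fin.last n)) ι hG hE (hc (Fin.last n))

end Aux

theorem mem_of_subobject_in_saturation
    {A : Type u} [Category.{v} A] [Abelian A] [MonoidalCategory A]
    {D : A → A} (C : TannakianSub A D) (E F : A) (hE : C.mem E)
    (ι : F ⟶ E) (hι : Mono ι)
    (hF : C.InSaturation F) (hQ : C.InSaturation (cokernel ι)) :
    C.mem F := by
  obtain ⟨n, G, g, h0, ⟨e⟩, hm, hc⟩ := hF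
  have : Mono (e.hom ≫ ι) := mono_comp _ _
  exact C.mem_of_iso e (mem_top_of_filtration C n G g h0 hm hc E hE (e.hom ≫ ι) this)
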